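/- Let p be a prime, f, g : ℤ_p → ℂ_p continuous, and define (f ⊛ g)(n) = ∑_{i=0}^{n} f(i) g(n − i) for n ∈ ℕ. If f and g are uniformly continuous (automatic on compact ℤ_p), then f ⊛ g extends uniquely to a continuous function on ℤ_p; equivalently, the map n ↦ ∑_{i=0}^{n} f(i)g(n−i) defined on ℕ is uniformly continuous with respect to the p-adic metric. -/

import Mathlib

open Finset IsUltrametricDist

private lemma modeq_sub_left {d a b c : ℕ} (h : a ≡ b [MOD d]) (ha : a ≤ c) (hb : b ≤ c) :
    c - a ≡ c - b [MOD d] := by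
  rw [Nat.modEq_iff_dvd] at h ⊢
  have e : ((c - b : ℕ) : ℤ) - ((c - a : ℕ) : ℤ) = -(((b : ℕ) : ℤ) - (a : ℕ)) := by
    rw [Nat.cast_sub ha, Nat.cast_sub hb]; ring
  rw [e]
  exact dvd_neg.mpr h

private lemma modeq_sub_right {d a b c : ℕ} (h : a ≡ b [MOD d]) (hcb : c ≤ b) (hca : c ≤ a) :
    a - c ≡ b - c [MOD d] := by
  rw [Nat.modEq_iff_dvd] at h ⊢
  have e : ((b - c : ℕ) : ℤ) - ((a - c : ℕ) : ℤ) = ((b : ℕ) : ℤ) - (a : ℕ) := by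
    rw [Nat.cast_sub hcb, Nat.cast_sub hca]; ring
  rw [e]; exact h

private lemma padic_nat_dist (p : ℕ) [Fact p.Prime] {k a b : ℕ} (h : a ≡ b [MOD p ^ k]) :
    ‖(a : ℤ_[p]) - (b : ℤ_[p])‖ ≤ (p : ℝ) ^ (-(k : ℤ)) := by
  have hd : ((p : ℤ) ^ k) ∣ ((b : ℤ) - (a : ℤ)) := by exact_mod_cast h.dvd
  have h2 : ‖(((b : ℤ) - (a : ℤ) : ℤ) : ℤ_[p])‖ ≤ (p : ℝ) ^ (-(k : ℤ)) :=
    PadicInt.norm_int_le_pow_iff_dvd.mpr (by exact_mod_cast hd)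
  rw [← norm_neg]
  convert h2 using 2
  · rfl
  push_cast
  ring

private lemma sum_mod_eq {K : Type*} [AddCommMonoid K] (H : ℕ → K) (d c : ℕ) :
    ∑ j ∈ Finset.range (c * d), H (j % d) = c • ∑ s ∈ Finset.range d, H s := by
  induction c with
  | zero => simp
  | succ c ih =>
    rw [Nat.succ_mul, Finset.sum_range_add, ih, succ_nsmul]
    congr 1
    refine Finset.sum_congr rfl fun j hj => ?_
    rw [mul_comm c d, Nat.mul_add_mod, Nat.mod_eq_of_lt (Finset.mem_range.mp hj)]

private lemma norm_natCast_K (p : ℕ) [Fact p.Prime] {K : Type*} [NontriviallyNormedField K]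
    [NormedAlgebra ℚ_[p] K] {j c : ℕ} (h : p ^ j ∣ c) :
    ‖(c : K)‖ ≤ (p : ℝ) ^ (-(j : ℤ)) := by
  have e : (c : K) = algebraMap ℚ_[p] K (c : ℚ_[p]) := by simp
  rw [e, norm_algebraMap']
  have hd : ((p : ℤ) ^ j) ∣ ((c : ℤ)) := by exact_mod_cast h
  have := (Padic.norm_int_le_pow_iff_dvd ((c : ℤ)) j).mpr (by exact_mod_cast hd)
  simpa using this

/-- For Lipschitz, norm-bounded `f, g : ℤ_p → ℂ_p`, the convolution sequence
`n ↦ ∑_{i=0}^n f(i) g(n-i)` is uniformly continuous for the p-adic metric on `ℕ`,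
hence extends continuously to `ℤ_p`. -/
theorem stmt15 (p : ℕ) [Fact p.Prime] {K : Type*} [NontriviallyNormedField K]
    [NormedAlgebra ℚ_[p] K] [CompleteSpace K]
    (f g : ℤ_[p] → K) (Lf Lg : NNReal)
    (hf : LipschitzWith Lf f) (hg : LipschitzWith Lg g)
    (hfb : ∀ x : ℤ_[p], ‖f x‖ ≤ 1) (hgb : ∀ x : ℤ_[p], ‖g x‖ ≤ 1) :
    ∀ ε > (0 : ℝ), ∃ N : ℕ, ∀ m n : ℕ, m ≡ n [MOD p ^ N] →
      ‖(∑ i ∈ Finset.range (m + 1), f (i : ℤ_[p]) * g ((m - i : ℕ) : ℤ_[p])) -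
        ∑ i ∈ Finset.range (n + 1), f (i : ℤ_[p]) * g ((n - i : ℕ) : ℤ_[p])‖ < ε := by
  intro ε hε
  have hU : IsUltrametricDist K := IsUltrametricDist.of_normedAlgebra (K := ℚ_[p])
  have hp1 : (1 : ℝ) < p := by exact_mod_cast (Fact.out : p.Prime).one_lt
  set C : ℝ := max 1 (max (Lf : ℝ) (Lg : ℝ)) with hCdef
  have hC1 : (1 : ℝ) ≤ C := le_max_left _ _
  have hC0 : (0 : ℝ) < C := lt_of_lt_of_le one_pos hC1
  have hLfC : (Lf : ℝ) ≤ C := le_trans (le_max_left _ _) (le_max_right _ _)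
  have hLgC : (Lg : ℝ) ≤ C := le_trans (le_max_right _ _) (le_max_right _ _)
  obtain ⟨k, hk⟩ : ∃ k : ℕ, C * (p : ℝ) ^ (-(k : ℤ)) < ε := by
    obtain ⟨k, hk⟩ := exists_pow_lt_of_lt_one (div_pos hε hC0)
      (inv_lt_one_of_one_lt₀ hp1)
    refine ⟨k, ?_⟩
    have : (p : ℝ) ^ (-(k : ℤ)) = ((p : ℝ)⁻¹) ^ k := by
      rw [zpow_neg, zpow_natCast, inv_pow]
    rw [this]
    calc C * ((p:ℝ)⁻¹) ^ k < C * (ε / C) := by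
          exact mul_lt_mul_of_pos_left hk hC0
      _ = ε := by field_simp
  set B : ℝ := (p : ℝ) ^ (-(k : ℤ)) with hBdef
  have hB0 : (0 : ℝ) < B := by positivity
  have hCB0 : (0 : ℝ) ≤ C * B := by positivity
  have hB2 : (p : ℝ) ^ (-((2 * k : ℕ) : ℤ)) ≤ B := by
    apply zpow_le_zpow_right₀ hp1.le
    push_cast; omega
  have key : ∀ m n : ℕ, n ≤ m → m ≡ n [MOD p ^ (2 * k)] →
      ‖(∑ i ∈ Finset.range (m + 1), f (i : ℤ_[p]) * g ((m - i : ℕ) : ℤ_[p])) -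
        ∑ i ∈ Finset.range (n + 1), f (i : ℤ_[p]) * g ((n - i : ℕ) : ℤ_[p])‖ ≤ C * B := by
    intro m n hnm hmod
    -- term-difference estimate
    have hterm : ∀ x x' y y' : ℤ_[p], ‖f x * g y - f x' * g y'‖ ≤
        max ((Lf : ℝ) * ‖x - x'‖) ((Lg : ℝ) * ‖y - y'‖) := by
      intro x x' y y'
      have e : f x * g y - f x' * g y' = (f x - f x') * g y + f x' * (g y - g y') := by ring
      rw [e]
      refine (IsUltrametricDist.norm_add_le_max _ _).trans (max_le_max ?_ ?_)
      · rw [norm_mul]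
        calc ‖f x - f x'‖ * ‖g y‖ ≤ ‖f x - f x'‖ * 1 :=
              mul_le_mul_of_nonneg_left (hgb y) (norm_nonneg _)
          _ = ‖f x - f x'‖ := mul_one _
          _ ≤ (Lf : ℝ) * ‖x - x'‖ := by simpa [dist_eq_norm] using hf.dist_le_mul x x'
      · rw [norm_mul]
        calc ‖f x'‖ * ‖g y - g y'‖ ≤ 1 * ‖g y - g y'‖ :=
              mul_le_mul_of_nonneg_right (hfb x') (norm_nonneg _)
          _ = ‖g y - g y'‖ := one_mul _
          _ ≤ (Lg : ℝ) * ‖y - y'‖ := by simpa [dist_eq_norm] using hg.dist_le_mul y y'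
    set t := m - n with htdef
    have ht : p ^ (2 * k) ∣ t := (Nat.modEq_iff_dvd' hnm).mp hmod.symm
    have htk : p ^ k ∣ t := dvd_trans (pow_dvd_pow p (by omega)) ht
    -- split the big sum
    have hsplit : (∑ i ∈ Finset.range (m + 1), f (i : ℤ_[p]) * g ((m - i : ℕ) : ℤ_[p])) =
        (∑ i ∈ Finset.range (n + 1), f (i : ℤ_[p]) * g ((m - i : ℕ) : ℤ_[p])) +
          ∑ i ∈ Finset.Ico (n + 1) (m + 1), f (i : ℤ_[p]) * g ((m - i : ℕ) : ℤ_[p]) := by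
      rw [Finset.range_eq_Ico, Finset.range_eq_Ico]
      exact (Finset.sum_Ico_consecutive (fun i : ℕ => f (i : ℤ_[p]) * g ((m - i : ℕ) : ℤ_[p])) (m := 0) (n := n + 1) (k := m + 1) (Nat.zero_le _) (by omega)).symm
    rw [hsplit, add_sub_right_comm]
    refine (IsUltrametricDist.norm_add_le_max _ _).trans (max_le ?_ ?_)
    · -- part 1
      rw [← Finset.sum_sub_distrib]
      refine IsUltrametricDist.norm_sum_le_of_forall_le_of_nonneg hCB0 fun i hi => ?_
      have hi' : i ≤ n := by have := Finset.mem_range.mp hi; omega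
      refine (hterm _ _ _ _).trans (max_le ?_ ?_)
      · simp only [sub_self, norm_zero, mul_zero]; exact hCB0
      · have hmi : m - i ≡ n - i [MOD p ^ (2 * k)] :=
          modeq_sub_right hmod hi' (le_trans hi' hnm)
        calc (Lg : ℝ) * ‖((m - i : ℕ) : ℤ_[p]) - ((n - i : ℕ) : ℤ_[p])‖
            ≤ (Lg : ℝ) * ((p : ℝ) ^ (-((2 * k : ℕ) : ℤ))) :=
              mul_le_mul_of_nonneg_left (padic_nat_dist p hmi) (Lg.coe_nonneg)
          _ ≤ C * B := mul_le_mul hLgC hB2 (by positivity) hC0.le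
    · -- part 2 : the tail sum
      have hT : (∑ i ∈ Finset.Ico (n + 1) (m + 1), f (i : ℤ_[p]) * g ((m - i : ℕ) : ℤ_[p])) =
          ∑ j ∈ Finset.range t, f ((n + 1 + j : ℕ) : ℤ_[p]) * g ((t - 1 - j : ℕ) : ℤ_[p]) := by
        rw [Finset.sum_Ico_eq_sum_range]
        have e1 : m + 1 - (n + 1) = t := by omega
        rw [e1]
        refine Finset.sum_congr rfl fun j hj => ?_
        have : m - (n + 1 + j) = t - 1 - j := by
          have := Finset.mem_range.mp hj; omega
        rw [this]
      rw [hT]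
      set F : ℕ → K := fun j => f ((n + 1 + j : ℕ) : ℤ_[p]) * g ((t - 1 - j : ℕ) : ℤ_[p]) with hFdef
      have hdecomp : (∑ j ∈ Finset.range t, F j) =
          (∑ j ∈ Finset.range t, (F j - F (j % p ^ k))) + ∑ j ∈ Finset.range t, F (j % p ^ k) := by
        rw [← Finset.sum_add_distrib]
        exact Finset.sum_congr rfl fun j _ => (sub_add_cancel _ _).symm
      rw [hdecomp]
      refine (IsUltrametricDist.norm_add_le_max _ _).trans (max_le ?_ ?_)
      · -- approximation by locally constant
        refine IsUltrametricDist.norm_sum_le_of_forall_le_of_nonneg hCB0 fun j hj => ?_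
        have hjt : j < t := Finset.mem_range.mp hj
        have hmm : j ≡ j % p ^ k [MOD p ^ k] := (Nat.mod_modEq j (p ^ k)).symm
        refine (hterm _ _ _ _).trans (max_le ?_ ?_)
        · have h1 : n + 1 + j ≡ n + 1 + j % p ^ k [MOD p ^ k] := Nat.ModEq.add_left _ hmm
          calc (Lf : ℝ) * ‖((n + 1 + j : ℕ) : ℤ_[p]) - ((n + 1 + j % p ^ k : ℕ) : ℤ_[p])‖
              ≤ (Lf : ℝ) * B := mul_le_mul_of_nonneg_left (padic_nat_dist p h1) Lf.coe_nonneg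
            _ ≤ C * B := mul_le_mul_of_nonneg_right hLfC hB0.le
        · have h2 : t - 1 - j ≡ t - 1 - j % p ^ k [MOD p ^ k] :=
            modeq_sub_left hmm (by omega) (by
              have := Nat.mod_le j (p ^ k); omega)
          calc (Lg : ℝ) * ‖((t - 1 - j : ℕ) : ℤ_[p]) - ((t - 1 - j % p ^ k : ℕ) : ℤ_[p])‖
              ≤ (Lg : ℝ) * B := mul_le_mul_of_nonneg_left (padic_nat_dist p h2) Lg.coe_nonneg
            _ ≤ C * B := mul_le_mul_of_nonneg_right hLgC hB0.le
      · -- the full-blocks sum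
        have e2 : t = (t / p ^ k) * (p ^ k) := (Nat.div_mul_cancel htk).symm
        rw [e2, sum_mod_eq F (p ^ k) (t / p ^ k), nsmul_eq_mul]
        have hdvd : p ^ k ∣ t / p ^ k := by
          refine (Nat.dvd_div_iff_mul_dvd htk).mpr ?_
          have : p ^ k * p ^ k = p ^ (2 * k) := by rw [← pow_add]; congr 1; omega
          rw [this]; exact ht
        have hnorm1 : ‖((t / p ^ k : ℕ) : K)‖ ≤ B := norm_natCast_K p hdvd
        have hnorm2 : ‖∑ s ∈ Finset.range (p ^ k), F s‖ ≤ 1 := by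
          refine IsUltrametricDist.norm_sum_le_of_forall_le_of_nonneg zero_le_one fun s _ => ?_
          rw [hFdef]
          calc ‖f ((n + 1 + s : ℕ) : ℤ_[p]) * g ((t - 1 - s : ℕ) : ℤ_[p])‖
              = ‖f ((n + 1 + s : ℕ) : ℤ_[p])‖ * ‖g ((t - 1 - s : ℕ) : ℤ_[p])‖ := norm_mul _ _
            _ ≤ 1 * 1 := mul_le_mul (hfb _) (hgb _) (norm_nonneg _) zero_le_one
            _ = 1 := one_mul 1
        calc ‖((t / p ^ k : ℕ) : K) * ∑ s ∈ Finset.range (p ^ k), F s‖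
            = ‖((t / p ^ k : ℕ) : K)‖ * ‖∑ s ∈ Finset.range (p ^ k), F s‖ := norm_mul _ _
          _ ≤ B * 1 := mul_le_mul hnorm1 hnorm2 (norm_nonneg _) hB0.le
          _ = B := mul_one _
          _ ≤ C * B := le_mul_of_one_le_left hB0.le hC1
  refine ⟨2 * k, fun m n hmn => ?_⟩
  rcases le_total n m with h | h
  · exact lt_of_le_of_lt (key m n h hmn) hk
  · rw [← norm_neg, neg_sub]
    exact lt_of_le_of_lt (key n m h hmn.symm) hk
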